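/- With δ_t defined by δ_0 = 0, δ_{1,t+1} = κ + (2/3)δ_{1,t} + (1/3)δ_{2,t}, δ_{n,t+1} = κ + (2/3)δ_{n,t} + (1/3)δ_{n-1,t}, δ_{i,t+1} = (1/3)(δ_{i-1,t} + δ_{i,t} + δ_{i+1,t}) for 2 ≤ i ≤ n-1, one has monotonicity along the chain: δ_{i,t} ≥ δ_{i+1,t} for all i < n/2 and all t ≥ 0. -/

import Mathlib

/-- The recursion `δ_0 = 0`, `δ_{1,t+1} = κ + (2/3)δ_{1,t} + (1/3)δ_{2,t}`,
`δ_{n,t+1} = κ + (2/3)δ_{n,t} + (1/3)δ_{n-1,t}`,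
`δ_{i,t+1} = (1/3)(δ_{i-1,t} + δ_{i,t} + δ_{i+1,t})` for `2 ≤ i ≤ n-1`,
is monotone along the chain: `δ_{i,t} ≥ δ_{i+1,t}` for all `i < n/2` and all `t ≥ 0`. -/
theorem stmt_12 (n : ℕ) (hn : 2 ≤ n) (κ : ℚ) (hκ : 0 < κ)
    (δ : ℕ → ℕ → ℚ)
    (h0 : ∀ i, 1 ≤ i → i ≤ n → δ 0 i = 0)
    (h1 : ∀ t, δ (t + 1) 1 = κ + (2/3) * δ t 1 + (1/3) * δ t 2)
    (hend : ∀ t, δ (t + 1) n = κ + (2/3) * δ t n + (1/3) * δ t (n - 1))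
    (hmid : ∀ t, ∀ i, 2 ≤ i → i ≤ n - 1 →
      δ (t + 1) i = (1/3) * (δ t (i - 1) + δ t i + δ t (i + 1))) :
    ∀ t, ∀ i, 1 ≤ i → 2 * i < n → δ t (i + 1) ≤ δ t i := by
  have sym : ∀ t, ∀ i, 1 ≤ i → i ≤ n → δ t i = δ t (n + 1 - i) := by
    intro t
    induction t with
    | zero => intro i hi hin; rw [h0 i hi hin, h0 (n+1-i) (by omega) (by omega)]
    | succ t ih =>
      intro i hi hin
      rcases eq_or_lt_of_le hi with h | h1i
      · have : i = 1 := h.symm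
        subst this
        have e : n + 1 - 1 = n := by omega
        rw [e, h1 t, hend t]
        have a := ih 1 (by omega) (by omega)
        have b := ih 2 (by omega) hn
        have e2 : n + 1 - 2 = n - 1 := by omega
        have e1 : n + 1 - 1 = n := by omega
        rw [e1] at a; rw [e2] at b
        rw [a, b]
      rcases eq_or_lt_of_le hin with h | hlt
      · rw [h]
        have e : n + 1 - n = 1 := by omega
        rw [e, h1 t, hend t]
        have a := ih 1 (by omega) (by omega)
        have b := ih 2 (by omega) hn
        have e2 : n + 1 - 2 = n - 1 := by omega
        have e1 : n + 1 - 1 = n := by omega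
        rw [e1] at a; rw [e2] at b
        rw [a, b]
      · have hi2 : 2 ≤ i := h1i
        have hin1 : i ≤ n - 1 := by omega
        set j := n + 1 - i with hj
        have hj2 : 2 ≤ j := by omega
        have hjn1 : j ≤ n - 1 := by omega
        rw [hmid t i hi2 hin1, hmid t j hj2 hjn1]
        have a := ih (i-1) (by omega) (by omega)
        have b := ih i (by omega) (by omega)
        have c := ih (i+1) (by omega) (by omega)
        have e1 : n + 1 - (i-1) = j + 1 := by omega
        have e3 : n + 1 - (i+1) = j - 1 := by omega
        rw [e1] at a; rw [e3] at c
        rw [a, b, c]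
        ring
  have main : ∀ t, ∀ i, 1 ≤ i → 2 * i ≤ n → δ t (i + 1) ≤ δ t i := by
    intro t
    induction t with
    | zero =>
      intro i hi hin
      rw [h0 i hi (by omega), h0 (i+1) (by omega) (by omega)]
    | succ t ih =>
      intro i hi hin
      rcases eq_or_lt_of_le hin with heq | hlt
      · have s := sym (t+1) (i+1) (by omega) (by omega)
        have e : n + 1 - (i+1) = i := by omega
        rw [e] at s
        exact le_of_eq s
      · rcases eq_or_lt_of_le hi with h | hi2
        · have : i = 1 := h.symm
          subst this
          rw [h1 t, hmid t 2 (by omega) (by omega)]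
          have e21 : (2:ℕ) - 1 = 1 := rfl
          rw [e21]
          have h12 : δ t 2 ≤ δ t 1 := ih 1 (by omega) (by omega)
          have h31 : δ t 3 ≤ δ t 1 := by
            rcases eq_or_lt_of_le (show 3 ≤ n by omega) with h3 | h4
            · have s := sym t 3 (by omega) (by omega)
              have e : n + 1 - 3 = 1 := by omega
              rw [e] at s
              rw [s]
            · have a := ih 1 (by omega) (by omega)
              have b := ih 2 (by omega) (by omega)
              linarith
          linarith
        · have hi2' : 2 ≤ i := hi2
          rw [hmid t i hi2' (by omega), hmid t (i+1) (by omega) (by omega)]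
          have hstep : δ t (i+2) ≤ δ t (i-1) := by
            have a := ih (i-1) (by omega) (by omega)
            have b := ih i (by omega) (by omega)
            have ea : i - 1 + 1 = i := by omega
            rw [ea] at a
            by_cases hc : 2 * (i+1) ≤ n
            · have c := ih (i+1) (by omega) hc
              have e : i + 1 + 1 = i + 2 := by omega
              rw [e] at c
              linarith
            · have s := sym t (i+2) (by omega) (by omega)
              have e : n + 1 - (i+2) = i := by omega
              rw [e] at s
              linarith
          have ea : i + 1 - 1 = i := by omega
          have eb : i + 1 + 1 = i + 2 := by omega
          rw [ea, eb]
          linarith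
  intro t i hi hlt
  exact main t i hi (by omega)
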